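/- arXiv:2007.04894 — 2 statements merged into one kernel-verified Lean document; each statement's English description precedes it below -/
import Mathlib

section
/- Lower bound for widths of the set V_k in ℓ_2^m: for 1 ≤ k ≤ m and 0 ≤ n ≤ m, d_n(V_k, ℓ_2^m) ≥ k^{1/2}(1 - n/m)^{1/2}. -/
open scoped ENNReal BigOperators Pointwise

/-- The `l_p` norm on `ℝ^m`, for `p ∈ [1, ∞]` (`p = ∞` gives the max norm). -/
noncomputable def pNorm {m : ℕ} (p : ℝ≥0∞) (x : Fin m → ℝ) : ℝ :=
  if p = ∞ then ⨆ i, |x i| else (∑ i, |x i| ^ p.toReal) ^ (1 / p.toReal)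

/-- The closed unit ball of `l_p^m`. -/
noncomputable def pBall (m : ℕ) (p : ℝ≥0∞) : Set (Fin m → ℝ) :=
  {x | pNorm p x ≤ 1}

/-- The Kolmogorov `n`-width of `M ⊆ ℝ^m` in `l_q^m`. -/
noncomputable def kolWidth {m : ℕ} (q : ℝ≥0∞) (n : ℕ) (M : Set (Fin m → ℝ)) : ℝ :=
  ⨅ L : {L : Submodule ℝ (Fin m → ℝ) // Module.finrank ℝ L ≤ n},
    ⨆ x : M, ⨅ y : (L : Submodule ℝ (Fin m → ℝ)), pNorm q ((x : Fin m → ℝ) - (y : Fin m → ℝ))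

/-- `V_k`: the convex hull of all vectors in `ℝ^m` with exactly `k` coordinates
equal to `±1` and the remaining coordinates `0`. -/
noncomputable def Vk (m k : ℕ) : Set (Fin m → ℝ) :=
  convexHull ℝ {v : Fin m → ℝ | (∀ i, v i = 1 ∨ v i = -1 ∨ v i = 0) ∧
    {i | v i ≠ 0}.ncard = k}

section Aux

open Finset

lemma pNorm_two_eq {m : ℕ} (x : Fin m → ℝ) :
    pNorm 2 x = Real.sqrt (∑ i, (x i) ^ 2) := by
  rw [pNorm, if_neg (by simp), Real.sqrt_eq_rpow]
  norm_num

lemma enorm_eq {m : ℕ} (v : EuclideanSpace ℝ (Fin m)) :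
    ‖v‖ = Real.sqrt (∑ i, (v i) ^ 2) := by
  rw [EuclideanSpace.norm_eq]; simp [sq_abs]

lemma greedy {F : Type*} [NormedAddCommGroup F] [InnerProductSpace ℝ F] {ι : Type*}
    [DecidableEq ι] (w : ι → F) (S : Finset ι) :
    ∃ ε : ι → ℝ, (∀ i, ε i = 1 ∨ ε i = -1) ∧
      ‖∑ i ∈ S, ε i • w i‖ ^ 2 ≤ ∑ i ∈ S, ‖w i‖ ^ 2 := by
  induction S using Finset.induction_on with
  | empty => exact ⟨fun _ => 1, fun _ => Or.inl rfl, by simp⟩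
  | @insert a S ha ih =>
    obtain ⟨ε, hε, hle⟩ := ih
    set u := ∑ i ∈ S, ε i • w i with hu
    set c : ℝ := if inner ℝ u (w a) ≤ (0:ℝ) then 1 else -1 with hc
    refine ⟨Function.update ε a c, ?_, ?_⟩
    · intro i
      by_cases h : i = a
      · subst h; rw [Function.update_self, hc]; split <;> simp
      · rw [Function.update_of_ne h]; exact hε i
    · rw [Finset.sum_insert ha, Finset.sum_insert ha, Function.update_self]
      have hrest : ∑ i ∈ S, Function.update ε a c i • w i = u := by
        refine Finset.sum_congr rfl fun i hi => ?_
        rw [Function.update_of_ne (by rintro rfl; exact ha hi)]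
      rw [hrest]
      have hsq : ‖c • w a + u‖ ^ 2 = ‖c • w a‖ ^ 2 + 2 * inner ℝ (c • w a) u + ‖u‖ ^ 2 :=
        norm_add_sq_real _ _
      have hnc : ‖c • w a‖ = ‖w a‖ := by
        rw [norm_smul, Real.norm_eq_abs, hc]; split <;> simp
      have hinner : (inner ℝ (c • w a) u : ℝ) ≤ 0 := by
        rw [real_inner_smul_left, real_inner_comm, hc]
        split
        case isTrue h => simpa using h
        case isFalse h => push_neg at h; nlinarith
      rw [hnc] at hsq
      linarith

lemma select {m k : ℕ} (hkm : k ≤ m) (a : Fin m → ℝ) :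
    ∃ S : Finset (Fin m), S.card = k ∧ (m:ℝ) * ∑ i ∈ S, a i ≤ (k:ℝ) * ∑ i, a i := by
  set σ := Tuple.sort a with hσ
  have hg : Monotone (a ∘ σ) := Tuple.monotone_sort a
  set g : Fin m → ℝ := a ∘ σ with hgdef
  set A : Finset (Fin m) := univ.filter (fun j => (j:ℕ) < k) with hA
  have hAeq : A = (univ : Finset (Fin k)).map ⟨Fin.castLE hkm, Fin.castLE_injective hkm⟩ := by
    ext j
    simp only [hA, mem_filter, mem_univ, true_and, mem_map, Function.Embedding.coeFn_mk]
    constructor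
    · intro h
      exact ⟨⟨j, h⟩, by simp [Fin.ext_iff]⟩
    · rintro ⟨i, rfl⟩; exact i.2
  have hAcard : A.card = k := by rw [hAeq]; simp
  have hAc : A.card + Aᶜ.card = m := by
    rw [card_add_card_compl]; simp
  have hkey : (Aᶜ.card : ℝ) * ∑ i ∈ A, g i ≤ (A.card : ℝ) * ∑ i ∈ Aᶜ, g i := by
    have h1 : ∑ i ∈ A, ∑ _j ∈ Aᶜ, g i ≤ ∑ _i ∈ A, ∑ j ∈ Aᶜ, g j := by
      refine Finset.sum_le_sum fun i hi => Finset.sum_le_sum fun j hj => hg ?_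
      simp only [hA, mem_filter, mem_univ, true_and, mem_compl, not_lt] at hi hj
      exact Fin.le_def.mpr (le_trans (le_of_lt hi) hj)
    simp only [Finset.sum_const, nsmul_eq_mul] at h1
    rwa [← Finset.mul_sum] at h1
  have htot : ∑ i ∈ A, g i + ∑ i ∈ Aᶜ, g i = ∑ i, g i := Finset.sum_add_sum_compl A g
  have hsum_g : ∑ i, g i = ∑ i, a i := Fintype.sum_bijective σ σ.bijective _ _ (fun i => rfl)
  refine ⟨A.image σ, ?_, ?_⟩
  · rw [Finset.card_image_of_injective _ σ.injective, hAcard]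
  · rw [Finset.sum_image (fun i _ j _ h => σ.injective h)]
    have : ∑ i ∈ A, a (σ i) = ∑ i ∈ A, g i := rfl
    rw [this, ← hsum_g, ← htot]
    have hm' : (m:ℝ) = (A.card : ℝ) + (Aᶜ.card : ℝ) := by exact_mod_cast hAc.symm
    rw [hm', hAcard]
    rw [hAcard] at hkey
    ring_nf
    linarith

lemma proj_trace {m : ℕ} (L : Submodule ℝ (EuclideanSpace ℝ (Fin m))) :
    ∑ i, ‖(Submodule.orthogonalProjectionOnto L (EuclideanSpace.single i 1) :
        EuclideanSpace ℝ (Fin m))‖ ^ 2 = Module.finrank ℝ L := by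
  set b := stdOrthonormalBasis ℝ L with hb
  have hsum : ∀ v : EuclideanSpace ℝ (Fin m), ∑ i, (v i) ^ 2 = ‖v‖ ^ 2 := by
    intro v
    rw [enorm_eq, Real.sq_sqrt (Finset.sum_nonneg fun i _ => sq_nonneg _)]
  have hnorm : ∀ i, ‖(Submodule.orthogonalProjectionOnto L (EuclideanSpace.single i (1:ℝ)) :
      EuclideanSpace ℝ (Fin m))‖ ^ 2
      = ∑ j, (((b j : EuclideanSpace ℝ (Fin m))) i) ^ 2 := by
    intro i
    rw [b.orthogonalProjectionOnto_apply_eq_sum]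
    have h2 : ∀ j, (inner ℝ (b j : EuclideanSpace ℝ (Fin m)) (EuclideanSpace.single i (1:ℝ)) : ℝ)
        = ((b j : EuclideanSpace ℝ (Fin m))) i := by
      intro j
      rw [EuclideanSpace.inner_single_right]
      simp
    rw [← real_inner_self_eq_norm_sq]
    have hcoe : ((∑ j, (inner ℝ (b j : EuclideanSpace ℝ (Fin m))
          (EuclideanSpace.single i (1:ℝ)) : ℝ) • b j : L) : EuclideanSpace ℝ (Fin m))
        = ∑ j, (inner ℝ (b j : EuclideanSpace ℝ (Fin m)) (EuclideanSpace.single i (1:ℝ)) : ℝ) •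
          (b j : EuclideanSpace ℝ (Fin m)) := by
      push_cast
      rfl
    rw [hcoe]
    have hON : Orthonormal ℝ (fun j => (b j : EuclideanSpace ℝ (Fin m))) := by
      have := b.orthonormal
      rw [orthonormal_iff_ite] at this ⊢
      intro j l
      simpa [Submodule.coe_inner] using this j l
    rw [hON.inner_sum]
    simp only [h2]
    refine Finset.sum_congr rfl fun j _ => ?_
    simp [sq, starRingEnd_apply]
  calc ∑ i, ‖(Submodule.orthogonalProjectionOnto L (EuclideanSpace.single i (1:ℝ)) :
        EuclideanSpace ℝ (Fin m))‖ ^ 2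
      = ∑ i, ∑ j, (((b j : EuclideanSpace ℝ (Fin m))) i) ^ 2 :=
        Finset.sum_congr rfl fun i _ => hnorm i
    _ = ∑ j, ∑ i, (((b j : EuclideanSpace ℝ (Fin m))) i) ^ 2 := Finset.sum_comm
    _ = ∑ _j : Fin (Module.finrank ℝ L), (1:ℝ) := by
        refine Finset.sum_congr rfl fun j _ => ?_
        rw [hsum, show ‖(b j : EuclideanSpace ℝ (Fin m))‖ = ‖b j‖ from rfl,
          b.orthonormal.1 j]
        norm_num
    _ = Module.finrank ℝ L := by simp

lemma dist_sq_le {m : ℕ} (L : Submodule ℝ (EuclideanSpace ℝ (Fin m)))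
    (v y : EuclideanSpace ℝ (Fin m)) (hy : y ∈ L) :
    ‖v‖ ^ 2 - ‖(Submodule.orthogonalProjectionOnto L v : EuclideanSpace ℝ (Fin m))‖ ^ 2 ≤ ‖v - y‖ ^ 2 := by
  set P := (Submodule.orthogonalProjectionOnto L v : EuclideanSpace ℝ (Fin m)) with hP
  have h1 : ∀ w ∈ L, @inner ℝ _ _ (v - P) w = (0:ℝ) := fun w hw =>
    Submodule.starProjection_inner_eq_zero v w hw
  have h2 : ‖v‖ ^ 2 = ‖v - P‖ ^ 2 + ‖P‖ ^ 2 := by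
    have h := norm_add_sq_real (v - P) P
    rw [sub_add_cancel] at h
    rw [h, h1 P (Submodule.starProjection_apply_mem _ _)]
    ring
  have h3 : ‖v - y‖ ^ 2 = ‖v - P‖ ^ 2 + ‖P - y‖ ^ 2 := by
    have h := norm_add_sq_real (v - P) (P - y)
    rw [show v - P + (P - y) = v - y by abel] at h
    rw [h, h1 (P - y) (Submodule.sub_mem L (Submodule.starProjection_apply_mem _ _) hy)]
    ring
  nlinarith [sq_nonneg ‖P - y‖]

lemma vertex_sum_sq {m k : ℕ} (v : Fin m → ℝ)
    (hv : (∀ i, v i = 1 ∨ v i = -1 ∨ v i = 0) ∧ {i | v i ≠ 0}.ncard = k) :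
    ∑ i, (v i) ^ 2 = k := by
  classical
  obtain ⟨h1, h2⟩ := hv
  have h3 : ∀ i, (v i) ^ 2 = if v i ≠ 0 then (1:ℝ) else 0 := by
    intro i
    rcases h1 i with h | h | h <;> simp [h]
  rw [Finset.sum_congr rfl fun i _ => h3 i, Finset.sum_boole]
  have h4 : {i | v i ≠ 0} = ↑(Finset.univ.filter fun i => v i ≠ 0) := by
    ext i; simp
  rw [h4, Set.ncard_coe_finset] at h2
  rw [h2]

lemma vk_norm_le {m k : ℕ} (x : Fin m → ℝ) (hx : x ∈ Vk m k) :
    ‖(WithLp.toLp 2 x : EuclideanSpace ℝ (Fin m))‖ ≤ Real.sqrt k := by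
  have hC : Convex ℝ {z : Fin m → ℝ | ‖(WithLp.toLp 2 z : EuclideanSpace ℝ (Fin m))‖ ≤ Real.sqrt k} := by
    intro z hz w hw a b ha hb hab
    have : ‖a • (WithLp.toLp 2 z : EuclideanSpace ℝ (Fin m)) +
        b • (WithLp.toLp 2 w : EuclideanSpace ℝ (Fin m))‖ ≤ Real.sqrt k := by
      calc ‖a • (WithLp.toLp 2 z : EuclideanSpace ℝ (Fin m)) +
          b • (WithLp.toLp 2 w : EuclideanSpace ℝ (Fin m))‖
          ≤ a * ‖(WithLp.toLp 2 z : EuclideanSpace ℝ (Fin m))‖ +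
            b * ‖(WithLp.toLp 2 w : EuclideanSpace ℝ (Fin m))‖ := by
            refine le_trans (norm_add_le _ _) ?_
            rw [norm_smul, norm_smul, Real.norm_eq_abs, Real.norm_eq_abs,
              abs_of_nonneg ha, abs_of_nonneg hb]
        _ ≤ a * Real.sqrt k + b * Real.sqrt k := by gcongr <;> assumption
        _ = Real.sqrt k := by rw [← add_mul, hab, one_mul]
    exact this
  have hsub : {v : Fin m → ℝ | (∀ i, v i = 1 ∨ v i = -1 ∨ v i = 0) ∧
      {i | v i ≠ 0}.ncard = k} ⊆
      {z : Fin m → ℝ | ‖(WithLp.toLp 2 z : EuclideanSpace ℝ (Fin m))‖ ≤ Real.sqrt k} := by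
    intro v hv
    have := vertex_sum_sq v hv
    simp only [Set.mem_setOf_eq]
    rw [enorm_eq]
    exact Real.sqrt_le_sqrt (le_of_eq this)
  exact convexHull_min hsub hC hx

end Aux

theorem stmt11 (m k n : ℕ) (hk1 : 1 ≤ k) (hkm : k ≤ m) (hn : n ≤ m) :
    (k : ℝ) ^ ((1 : ℝ) / 2) * (1 - (n : ℝ) / m) ^ ((1 : ℝ) / 2) ≤
      kolWidth 2 n (Vk m k) := by
  classical
  have hm : 0 < m := lt_of_lt_of_le hk1 hkm
  have hm' : (0:ℝ) < m := by exact_mod_cast hm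
  have hfrac : (0:ℝ) ≤ 1 - (n:ℝ)/m := by
    rw [sub_nonneg, div_le_one hm']
    exact_mod_cast hn
  rw [show ((k:ℝ) ^ ((1:ℝ)/2)) = Real.sqrt k from (Real.sqrt_eq_rpow _).symm,
      show ((1 - (n:ℝ)/m) ^ ((1:ℝ)/2)) = Real.sqrt (1 - (n:ℝ)/m) from (Real.sqrt_eq_rpow _).symm]
  set c := Real.sqrt k * Real.sqrt (1 - (n:ℝ)/m) with hcdef
  have hc0 : 0 ≤ c := mul_nonneg (Real.sqrt_nonneg _) (Real.sqrt_nonneg _)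
  have hcsq : c ^ 2 = k * (1 - (n:ℝ)/m) := by
    rw [hcdef, mul_pow, Real.sq_sqrt (by positivity), Real.sq_sqrt hfrac]
  rw [kolWidth]
  haveI : Nonempty {L : Submodule ℝ (Fin m → ℝ) // Module.finrank ℝ L ≤ n} :=
    ⟨⟨⊥, by simp⟩⟩
  apply le_ciInf
  rintro ⟨L, hL⟩
  set L' : Submodule ℝ (EuclideanSpace ℝ (Fin m)) :=
      L.map (WithLp.linearEquiv 2 ℝ (Fin m → ℝ)).symm.toLinearMap with hL'
  set w : Fin m → EuclideanSpace ℝ (Fin m) :=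
    fun i => (Submodule.orthogonalProjectionOnto L' (EuclideanSpace.single i 1) :
      EuclideanSpace ℝ (Fin m)) with hw
  have htr : ∑ i, ‖w i‖ ^ 2 ≤ (n:ℝ) := by
    rw [show ∑ i, ‖w i‖ ^ 2 = ((Module.finrank ℝ L' : ℝ)) from by
      rw [← proj_trace L']]
    exact_mod_cast ((LinearEquiv.finrank_map_eq (WithLp.linearEquiv 2 ℝ (Fin m → ℝ)).symm L).trans_le hL)
  obtain ⟨S, hScard, hSle⟩ := select hkm (fun i => ‖w i‖ ^ 2)
  obtain ⟨ε, hε, hεle⟩ := greedy w S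
  have hεne : ∀ i, ε i ≠ 0 := fun i => by rcases hε i with h | h <;> rw [h] <;> norm_num
  set u : Fin m → ℝ := fun j => if j ∈ S then ε j else 0 with hu
  set uE : EuclideanSpace ℝ (Fin m) := ∑ i ∈ S, ε i • EuclideanSpace.single i 1 with huE
  have huEq : ∀ j, uE j = u j := by
    intro j
    rw [huE, show (∑ i ∈ S, ε i • EuclideanSpace.single i (1:ℝ)) j
        = ∑ i ∈ S, (ε i • EuclideanSpace.single i (1:ℝ)) j from by rw [WithLp.ofLp_sum, Finset.sum_apply]]
    simp only [PiLp.smul_apply, EuclideanSpace.single_apply, smul_eq_mul, mul_ite,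
      mul_one, mul_zero, hu]
    simp [eq_comm]
  have hu_vertex : (∀ i, u i = 1 ∨ u i = -1 ∨ u i = 0) ∧ {i | u i ≠ 0}.ncard = k := by
    constructor
    · intro i; rw [hu]; by_cases h : i ∈ S
      · simp only [if_pos h]
        rcases hε i with h' | h' <;> simp [h']
      · simp [h]
    · have hset : {i | u i ≠ 0} = ↑S := by
        ext i
        simp only [Set.mem_setOf_eq, hu, Finset.mem_coe]
        by_cases h : i ∈ S <;> simp [h, hεne i]
      rw [hset, Set.ncard_coe_finset, hScard]
  have hu_mem : u ∈ Vk m k := subset_convexHull ℝ _ hu_vertex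
  have huEnorm : ‖uE‖ ^ 2 = (k:ℝ) := by
    rw [enorm_eq, Real.sq_sqrt (Finset.sum_nonneg fun i _ => sq_nonneg _)]
    calc ∑ j, (uE j)^2 = ∑ j, (u j)^2 :=
          Finset.sum_congr rfl fun j _ => by rw [huEq]
      _ = k := vertex_sum_sq u hu_vertex
  have hproj : ‖(Submodule.orthogonalProjectionOnto L' uE : EuclideanSpace ℝ (Fin m))‖ ^ 2
      ≤ (k:ℝ) * n / m := by
    have hPu : (Submodule.orthogonalProjectionOnto L' uE : EuclideanSpace ℝ (Fin m))
        = ∑ i ∈ S, ε i • w i := by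
      rw [huE, map_sum]
      push_cast
      simp [hw]
    rw [hPu]
    refine le_trans hεle ?_
    have h1 : (m:ℝ) * ∑ i ∈ S, ‖w i‖^2 ≤ (k:ℝ) * ∑ i, ‖w i‖^2 := hSle
    have hk0 : (0:ℝ) ≤ k := by positivity
    rw [le_div_iff₀ hm']
    nlinarith [htr]
  have hkey : ∀ y : EuclideanSpace ℝ (Fin m), y ∈ L' → c ≤ ‖uE - y‖ := by
    intro y hy
    have h1 : c ^ 2 ≤ ‖uE - y‖ ^ 2 := by
      have h2 := dist_sq_le L' uE y hy
      rw [huEnorm] at h2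
      rw [hcsq]
      have h3 : (k:ℝ) * (1 - (n:ℝ)/m) = k - (k:ℝ) * n / m := by ring
      linarith
    calc c = Real.sqrt (c^2) := (Real.sqrt_sq hc0).symm
      _ ≤ Real.sqrt (‖uE - y‖^2) := Real.sqrt_le_sqrt h1
      _ = ‖uE - y‖ := Real.sqrt_sq (norm_nonneg _)
  haveI : Nonempty (Vk m k) := ⟨⟨u, hu_mem⟩⟩
  haveI : Nonempty L := ⟨0⟩
  have hbdd : BddAbove (Set.range fun x : (Vk m k) =>
      ⨅ y : L, pNorm 2 ((x : Fin m → ℝ) - (y : Fin m → ℝ))) := by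
    refine ⟨Real.sqrt k, ?_⟩
    rintro r ⟨x, rfl⟩
    have hbb : BddBelow (Set.range fun y : L =>
        pNorm 2 ((x : Fin m → ℝ) - (y : Fin m → ℝ))) := by
      refine ⟨0, ?_⟩; rintro r ⟨y, rfl⟩
      show (0:ℝ) ≤ pNorm 2 _
      rw [pNorm_two_eq]; exact Real.sqrt_nonneg _
    refine le_trans (ciInf_le hbb (⟨0, zero_mem L⟩ : L)) ?_
    rw [show ((⟨0, zero_mem L⟩ : L) : Fin m → ℝ) = 0 from rfl, sub_zero, pNorm_two_eq,
      ← enorm_eq (WithLp.toLp 2 (x : Fin m → ℝ) : EuclideanSpace ℝ (Fin m))]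
    exact vk_norm_le _ x.2
  refine le_trans ?_ (le_ciSup hbdd ⟨u, hu_mem⟩)
  apply le_ciInf
  intro y
  have hyE : pNorm 2 (u - (y : Fin m → ℝ))
      = ‖uE - (WithLp.toLp 2 (y : Fin m → ℝ) : EuclideanSpace ℝ (Fin m))‖ := by
    rw [pNorm_two_eq, enorm_eq]
    congr 1
    refine Finset.sum_congr rfl fun j _ => ?_
    have : (uE - (WithLp.toLp 2 (y : Fin m → ℝ) : EuclideanSpace ℝ (Fin m))) j
        = uE j - (y : Fin m → ℝ) j := rfl
    rw [this, huEq j]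
    rfl
  rw [hyE]
  exact hkey _ (Submodule.mem_map_of_mem y.2)
end

section
/- Order-sharp width of the intersection for q ≤ p₁: if 1 ≤ q ≤ p₁ < p₀ ≤ ∞, 1 ≤ k ≤ m, ν = k^{1/p₁-1/p₀}, and 0 ≤ n ≤ m/2, then d_n(B_{p₀}^m ∩ νB_{p₁}^m, ℓ_q^m) is bounded above and below, up to constants depending only on p₀, p₁, q, by k^{1/p₁ - 1/p₀} m^{1/q - 1/p₁}. -/
open scoped ENNReal BigOperators Pointwise Classical
open Finset

/-- Power mean inequality. -/
lemma pm_ineq {m : ℕ} (hm : 0 < m) (u : Fin m → ℝ) {s t : ℝ} (hs : 0 < s) (hst : s ≤ t) :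
    (∑ i, |u i| ^ s) ^ (1/s) ≤ (m : ℝ) ^ (1/s - 1/t) * (∑ i, |u i| ^ t) ^ (1/t) := by
  have ht : 0 < t := lt_of_lt_of_le hs hst
  have hm' : (0:ℝ) < m := by exact_mod_cast hm
  have hs0 : s ≠ 0 := ne_of_gt hs
  have ht0 : t ≠ 0 := ne_of_gt ht
  have hr : 1 ≤ t / s := (one_le_div hs).2 hst
  have h1 := Real.arith_mean_le_rpow_mean Finset.univ (fun _ => (m:ℝ)⁻¹)
    (fun i => |u i| ^ s) (fun i _ => by positivity)
    (by simp [Finset.card_univ]; field_simp)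
    (fun i _ => by positivity) hr
  simp only [← Finset.mul_sum] at h1
  have h2 : ∀ i : Fin m, (|u i| ^ s) ^ (t/s) = |u i| ^ t := by
    intro i
    rw [← Real.rpow_mul (abs_nonneg _)]
    congr 1
    field_simp
  have h2' : (∑ i, (|u i| ^ s) ^ (t/s)) = ∑ i, |u i| ^ t :=
    Finset.sum_congr rfl (fun i _ => h2 i)
  rw [h2', one_div_div] at h1
  have hX : (0:ℝ) ≤ ∑ i, |u i| ^ t := Finset.sum_nonneg (fun i _ => by positivity)
  have key : ∑ i, |u i| ^ s ≤ (m:ℝ) ^ (1 - s/t) * (∑ i, |u i| ^ t) ^ (s/t) := by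
    have h3 : ((m:ℝ)⁻¹ * ∑ i, |u i| ^ t) ^ (s/t)
        = (m:ℝ)⁻¹ ^ (s/t) * (∑ i, |u i| ^ t) ^ (s/t) :=
      Real.mul_rpow (by positivity) hX
    rw [h3] at h1
    have h4 : ∑ i, |u i| ^ s ≤ (m:ℝ) * ((m:ℝ)⁻¹ ^ (s/t) * (∑ i, |u i| ^ t) ^ (s/t)) := by
      calc ∑ i, |u i| ^ s = (m:ℝ) * ((m:ℝ)⁻¹ * ∑ i, |u i| ^ s) := by field_simp
      _ ≤ (m:ℝ) * ((m:ℝ)⁻¹ ^ (s/t) * (∑ i, |u i| ^ t) ^ (s/t)) := by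
          apply mul_le_mul_of_nonneg_left h1 (le_of_lt hm')
    calc ∑ i, |u i| ^ s ≤ (m:ℝ) * ((m:ℝ)⁻¹ ^ (s/t) * (∑ i, |u i| ^ t) ^ (s/t)) := h4
    _ = (m:ℝ) ^ (1 - s/t) * (∑ i, |u i| ^ t) ^ (s/t) := by
        rw [← mul_assoc]
        congr 1
        rw [Real.inv_rpow (le_of_lt hm'), ← Real.rpow_neg (le_of_lt hm'),
          show (1 : ℝ) - s/t = 1 + -(s/t) by ring, Real.rpow_add hm', Real.rpow_one]
  have hLHS : (0:ℝ) ≤ ∑ i, |u i| ^ s := Finset.sum_nonneg (fun i _ => by positivity)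
  have := Real.rpow_le_rpow hLHS key (by positivity : (0:ℝ) ≤ 1/s)
  calc (∑ i, |u i| ^ s) ^ (1/s)
      ≤ ((m:ℝ) ^ (1 - s/t) * (∑ i, |u i| ^ t) ^ (s/t)) ^ (1/s) := this
    _ = (m : ℝ) ^ (1/s - 1/t) * (∑ i, |u i| ^ t) ^ (1/t) := by
        rw [Real.mul_rpow (by positivity) (by positivity),
          ← Real.rpow_mul (le_of_lt hm'), ← Real.rpow_mul hX,
          show (1 - s/t) * (1/s) = 1/s - 1/t by field_simp,
          show (s/t) * (1/s) = 1/t by field_simp]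


noncomputable def oneSet {m : ℕ} (z : Fin m → ℝ) : Finset (Fin m) :=
  Finset.univ.filter (fun i => |z i| = 1)

lemma cube_step {m : ℕ} (V : Submodule ℝ (Fin m → ℝ)) (z : Fin m → ℝ) (hz : z ∈ V)
    (hb : ∀ i, |z i| ≤ 1) (hcard : (oneSet z).card < Module.finrank ℝ V) :
    ∃ z' ∈ V, (∀ i, |z' i| ≤ 1) ∧ (oneSet z).card < (oneSet z').card := by
  -- restriction map
  set ρ : V →ₗ[ℝ] (↥(oneSet z) → ℝ) :=
    LinearMap.pi (fun i => (LinearMap.proj i.1).comp V.subtype) with hρ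
  have hker : LinearMap.ker ρ ≠ ⊥ := by
    intro h
    have hinj : Function.Injective ρ := LinearMap.ker_eq_bot.1 h
    have := LinearMap.finrank_le_finrank_of_injective hinj
    rw [Module.finrank_fintype_fun_eq_card] at this
    simp [Fintype.card_coe] at this
    omega
  obtain ⟨w, hwker, hw0⟩ := (Submodule.ne_bot_iff _).1 hker
  have hwV : (w : Fin m → ℝ) ∈ V := w.2
  have hwS : ∀ i ∈ oneSet z, (w : Fin m → ℝ) i = 0 := by
    intro i hi
    have := LinearMap.mem_ker.1 hwker
    have := congrFun this ⟨i, hi⟩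
    simpa [hρ] using this
  have hwne : (w : Fin m → ℝ) ≠ 0 := by
    simpa [Submodule.coe_eq_zero] using hw0
  set wf := (w : Fin m → ℝ)
  set T : Finset (Fin m) := Finset.univ.filter (fun i => wf i ≠ 0) with hT
  have hTne : T.Nonempty := by
    obtain ⟨i, hi⟩ := Function.ne_iff.1 hwne
    refine ⟨i, ?_⟩
    simp only [hT, Finset.mem_filter, Finset.mem_univ, true_and]
    simpa using hi
  set sgn : Fin m → ℝ := fun i => if 0 < wf i then 1 else -1 with hsgn
  set τ : Fin m → ℝ := fun i => (1 - z i * sgn i) / |wf i| with hτ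
  have hsgabs : ∀ i, |sgn i| = 1 := by
    intro i
    by_cases h : 0 < wf i <;> simp [hsgn, h]
  have hsq : ∀ i, sgn i * sgn i = 1 := by
    intro i
    by_cases h : 0 < wf i <;> simp [hsgn, h]
  have hwfeq : ∀ i, wf i ≠ 0 → wf i = sgn i * |wf i| := by
    intro i hwi
    rcases lt_or_gt_of_ne hwi with h|h
    · rw [abs_of_neg h]; simp [hsgn, not_lt.2 (le_of_lt h)]
    · rw [abs_of_pos h]; simp [hsgn, h]
  have hτpos : ∀ i ∈ T, 0 < τ i := by
    intro i hi
    have hwi : wf i ≠ 0 := by simpa [hT] using hi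
    have hiS : i ∉ oneSet z := fun h => hwi (hwS i h)
    have hzi : |z i| < 1 := lt_of_le_of_ne (hb i) (by simpa [oneSet] using hiS)
    have h1 : |z i * sgn i| ≤ |z i| := by
      rw [abs_mul, hsgabs, mul_one]
    have : z i * sgn i < 1 := lt_of_le_of_lt (le_trans (le_abs_self _) h1) hzi
    apply div_pos (by linarith) (abs_pos.2 hwi)
  set tstar : ℝ := T.inf' hTne τ with htstar
  have htpos : 0 < tstar := by
    rw [htstar, Finset.lt_inf'_iff]
    exact hτpos
  obtain ⟨i₀, hi₀T, hi₀⟩ := Finset.exists_mem_eq_inf' hTne τ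
  have htle : ∀ i ∈ T, tstar ≤ τ i := fun i hi => Finset.inf'_le _ hi
  set z' : Fin m → ℝ := z + tstar • wf with hz'
  have hz'V : z' ∈ V := V.add_mem hz (V.smul_mem _ hwV)
  -- the value at τ i: z i + τ i * wf i = sgn i
  have hval : ∀ i ∈ T, z i + τ i * wf i = sgn i := by
    intro i hi
    have hwi : wf i ≠ 0 := by simpa [hT] using hi
    have habs : |wf i| ≠ 0 := abs_ne_zero.2 hwi
    have step : τ i * wf i = (1 - z i * sgn i) * sgn i := by
      rw [hwfeq i hwi]
      show (1 - z i * sgn i) / |wf i| * (sgn i * |wf i|) = _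
      field_simp
    rw [step]
    linear_combination (-(z i)) * hsq i
  have hb' : ∀ i, |z' i| ≤ 1 := by
    intro i
    by_cases hwi : wf i = 0
    · simp [hz', hwi, hb i]
    · have hiT : i ∈ T := by simp [hT, hwi]
      have h1 : |z i| ≤ 1 := hb i
      have habs := abs_le.1 h1
      rw [abs_le]
      have hτi := htle i hiT
      rcases lt_or_gt_of_ne hwi with h|h
      -- wf i < 0
      · constructor
        · have : τ i * wf i ≤ tstar * wf i := by
            apply mul_le_mul_of_nonpos_right hτi (le_of_lt h)
          have hv := hval i hiT
          have hsgni : sgn i = -1 := by simp [hsgn, not_lt.2 (le_of_lt h)]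
          simp only [hz', Pi.add_apply, Pi.smul_apply, smul_eq_mul]
          nlinarith [hv, hsgni]
        · have : tstar * wf i ≤ 0 := mul_nonpos_of_nonneg_of_nonpos (le_of_lt htpos) (le_of_lt h)
          simp only [hz', Pi.add_apply, Pi.smul_apply, smul_eq_mul]
          linarith
      -- wf i > 0
      · constructor
        · have : 0 ≤ tstar * wf i := mul_nonneg (le_of_lt htpos) (le_of_lt h)
          simp only [hz', Pi.add_apply, Pi.smul_apply, smul_eq_mul]
          linarith
        · have : tstar * wf i ≤ τ i * wf i := mul_le_mul_of_nonneg_right hτi (le_of_lt h)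
          have hv := hval i hiT
          have hsgni : sgn i = 1 := by simp [hsgn, h]
          simp only [hz', Pi.add_apply, Pi.smul_apply, smul_eq_mul]
          nlinarith [hv, hsgni]
  refine ⟨z', hz'V, hb', ?_⟩
  have hsub : oneSet z ⊆ oneSet z' := by
    intro i hi
    have hwi : wf i = 0 := hwS i hi
    simp only [oneSet, Finset.mem_filter, Finset.mem_univ, true_and] at hi ⊢
    simp [hz', hwi, hi]
  have hi₀S' : i₀ ∈ oneSet z' := by
    have hv := hval i₀ hi₀T
    have hi₀' : tstar = τ i₀ := by rw [htstar, hi₀]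
    have : z' i₀ = sgn i₀ := by
      simp only [hz', Pi.add_apply, Pi.smul_apply, smul_eq_mul]
      rw [hi₀']
      linarith
    simp only [oneSet, Finset.mem_filter, Finset.mem_univ, true_and, this]
    exact hsgabs i₀
  have hi₀S : i₀ ∉ oneSet z := by
    intro h
    have := hwS i₀ h
    simp [hT, this] at hi₀T
  exact Finset.card_lt_card ⟨hsub, fun h => hi₀S (h hi₀S')⟩

lemma cube_lemma {m : ℕ} (V : Submodule ℝ (Fin m → ℝ)) :
    ∃ z ∈ V, (∀ i, |z i| ≤ 1) ∧ ((Module.finrank ℝ V : ℝ) ≤ ∑ i, |z i|) := by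
  have main : ∀ N : ℕ, ∃ z ∈ V, (∀ i, |z i| ≤ 1) ∧
      min N (Module.finrank ℝ V) ≤ (oneSet z).card := by
    intro N
    induction N with
    | zero => exact ⟨0, V.zero_mem, by simp, by simp⟩
    | succ N ih =>
      obtain ⟨z, hzV, hb, hc⟩ := ih
      by_cases h : Module.finrank ℝ V ≤ (oneSet z).card
      · exact ⟨z, hzV, hb, le_trans (min_le_right _ _) h⟩
      · obtain ⟨z', hz'V, hb', hc'⟩ := cube_step V z hzV hb (not_le.1 h)
        exact ⟨z', hz'V, hb', by omega⟩
  obtain ⟨z, hzV, hb, hc⟩ := main (Module.finrank ℝ V)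
  simp only [min_self] at hc
  refine ⟨z, hzV, hb, ?_⟩
  calc (Module.finrank ℝ V : ℝ) ≤ (oneSet z).card := by exact_mod_cast hc
    _ = ∑ i ∈ oneSet z, (1:ℝ) := by simp
    _ ≤ ∑ i ∈ oneSet z, |z i| := by
        apply Finset.sum_le_sum
        intro i hi
        simp only [oneSet, Finset.mem_filter] at hi
        rw [hi.2]
    _ ≤ ∑ i, |z i| := Finset.sum_le_sum_of_subset_of_nonneg (Finset.subset_univ _)
        (fun i _ _ => abs_nonneg _)

lemma ann_lemma {m : ℕ} (L : Submodule ℝ (Fin m → ℝ)) :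
    ∃ V : Submodule ℝ (Fin m → ℝ),
      (∀ z ∈ V, ∀ y ∈ L, ∑ i, y i * z i = 0) ∧
      m - Module.finrank ℝ L ≤ Module.finrank ℝ V := by
  classical
  let Φ : (Fin m → ℝ) →ₗ[ℝ] (Module.Dual ℝ ↥L) :=
    { toFun := fun z =>
        { toFun := fun y => ∑ i, (y : Fin m → ℝ) i * z i,
          map_add' := fun y y' => by
            simp [add_mul, Finset.sum_add_distrib],
          map_smul' := fun c y => by
            simp [Finset.mul_sum, mul_assoc] },
      map_add' := fun z z' => by
        ext y
        simp [mul_add, Finset.sum_add_distrib],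
      map_smul' := fun c z => by
        ext y
        simp [Finset.mul_sum, mul_comm, mul_left_comm, mul_assoc] }
  refine ⟨LinearMap.ker Φ, ?_, ?_⟩
  · intro z hz y hy
    have h0 : Φ z = 0 := LinearMap.mem_ker.1 hz
    have := congrArg (fun f => f ⟨y, hy⟩) h0
    exact this
  · have h1 := LinearMap.finrank_range_add_finrank_ker Φ
    rw [Module.finrank_fintype_fun_eq_card, Fintype.card_fin] at h1
    have h2 : Module.finrank ℝ (LinearMap.range Φ) ≤ Module.finrank ℝ (Module.Dual ℝ ↥L) :=
      Submodule.finrank_le _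
    rw [Subspace.dual_finrank_eq] at h2
    omega

lemma pNorm_nonneg {m : ℕ} (p : ℝ≥0∞) (x : Fin m → ℝ) : 0 ≤ pNorm p x := by
  unfold pNorm
  split
  · exact Real.iSup_nonneg (fun i => abs_nonneg _)
  · exact Real.rpow_nonneg (Finset.sum_nonneg (fun i _ => Real.rpow_nonneg (abs_nonneg _) _)) _

lemma pNorm_zero {m : ℕ} (hm : 0 < m) (p : ℝ≥0∞) (hp : p ≠ 0) : pNorm p (0 : Fin m → ℝ) = 0 := by
  unfold pNorm
  haveI : Nonempty (Fin m) := ⟨⟨0, hm⟩⟩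
  split
  · simp [ciSup_const]
  · rename_i h
    have hpt : p.toReal ≠ 0 := ENNReal.toReal_ne_zero.2 ⟨hp, h⟩
    simp [Real.zero_rpow hpt, Real.zero_rpow (inv_ne_zero hpt)]

lemma pNorm_smul {m : ℕ} {p : ℝ≥0∞} (hp : p ≠ ∞) (hpt : 0 < p.toReal) (c : ℝ) (hc : 0 ≤ c)
    (x : Fin m → ℝ) : pNorm p (c • x) = c * pNorm p x := by
  unfold pNorm
  rw [if_neg hp, if_neg hp]
  have h1 : ∀ i : Fin m, |c * x i| ^ p.toReal = c ^ p.toReal * |x i| ^ p.toReal := by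
    intro i
    rw [abs_mul, abs_of_nonneg hc, Real.mul_rpow hc (abs_nonneg _)]
  simp only [Pi.smul_apply, smul_eq_mul, h1, ← Finset.mul_sum]
  rw [Real.mul_rpow (by positivity) (Finset.sum_nonneg (fun i _ => by positivity)),
    ← Real.rpow_mul hc, mul_one_div_cancel (ne_of_gt hpt), Real.rpow_one]

/-- p-norm of `c • v` with `|v i| ≤ 1` is at most `c * m^(1/p)`, finite `p`. -/
lemma pNorm_bd {m : ℕ} {p : ℝ≥0∞} (hp : p ≠ ∞) (hpt : 0 < p.toReal) (c : ℝ) (hc : 0 ≤ c)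
    (v : Fin m → ℝ) (hv : ∀ i, |v i| ≤ 1) :
    pNorm p (c • v) ≤ c * (m : ℝ) ^ (1 / p.toReal) := by
  unfold pNorm
  rw [if_neg hp]
  have h1 : ∀ i : Fin m, |c * v i| ^ p.toReal ≤ c ^ p.toReal := by
    intro i
    calc |c * v i| ^ p.toReal ≤ (c * 1) ^ p.toReal := by
          apply Real.rpow_le_rpow (abs_nonneg _) _ (le_of_lt hpt)
          rw [abs_mul, abs_of_nonneg hc]
          exact mul_le_mul_of_nonneg_left (hv i) hc
      _ = c ^ p.toReal := by rw [mul_one]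
  have h2 : (∑ i : Fin m, |c * v i| ^ p.toReal) ≤ (m : ℝ) * c ^ p.toReal := by
    calc (∑ i : Fin m, |c * v i| ^ p.toReal) ≤ ∑ _i : Fin m, c ^ p.toReal :=
          Finset.sum_le_sum (fun i _ => h1 i)
      _ = (m : ℝ) * c ^ p.toReal := by simp [Finset.card_univ, mul_comm]
  calc (∑ i : Fin m, |(c • v) i| ^ p.toReal) ^ (1 / p.toReal)
      ≤ ((m : ℝ) * c ^ p.toReal) ^ (1 / p.toReal) := by
        apply Real.rpow_le_rpow (Finset.sum_nonneg (fun i _ => by positivity)) _ (by positivity)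
        simpa using h2
    _ = c * (m : ℝ) ^ (1 / p.toReal) := by
        rw [Real.mul_rpow (by positivity) (by positivity), ← Real.rpow_mul hc,
          mul_one_div_cancel (ne_of_gt hpt), Real.rpow_one, mul_comm]

theorem stmt16 (p₀ p₁ q : ℝ≥0∞)
    (hq : 1 ≤ q) (hqp₁ : q ≤ p₁) (hp : p₁ < p₀) (hp₀ : p₀ ≤ ∞) :
    ∃ c C : ℝ, 0 < c ∧ 0 < C ∧
      ∀ (m k n : ℕ), 1 ≤ k → k ≤ m → 2 * n ≤ m →
        c * ((k : ℝ) ^ (1 / p₁.toReal - 1 / p₀.toReal) *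
            (m : ℝ) ^ (1 / q.toReal - 1 / p₁.toReal)) ≤
          kolWidth q n (pBall m p₀ ∩
            ((k : ℝ) ^ (1 / p₁.toReal - 1 / p₀.toReal)) • pBall m p₁) ∧
        kolWidth q n (pBall m p₀ ∩
            ((k : ℝ) ^ (1 / p₁.toReal - 1 / p₀.toReal)) • pBall m p₁) ≤
          C * ((k : ℝ) ^ (1 / p₁.toReal - 1 / p₀.toReal) *
            (m : ℝ) ^ (1 / q.toReal - 1 / p₁.toReal)) := by
  classical
  have hp₁top : p₁ ≠ ∞ := (lt_of_lt_of_le hp le_top).ne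
  have hqtop : q ≠ ∞ := (lt_of_le_of_lt hqp₁ (lt_of_lt_of_le hp le_top)).ne
  have hq0 : q ≠ 0 := fun h => by simp [h] at hq
  have hqr1 : 1 ≤ q.toReal := by
    have := ENNReal.toReal_mono hqtop hq
    simpa using this
  have hqr0 : 0 < q.toReal := lt_of_lt_of_le one_pos hqr1
  have hqp1r : q.toReal ≤ p₁.toReal := ENNReal.toReal_mono hp₁top hqp₁
  have hp1r0 : 0 < p₁.toReal := lt_of_lt_of_le hqr0 hqp1r
  have hp1r1 : 1 ≤ p₁.toReal := le_trans hqr1 hqp1r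
  have he₀ : 0 ≤ 1 / p₁.toReal - 1 / p₀.toReal := by
    by_cases h : p₀ = ∞
    · simp only [h, ENNReal.toReal_top, div_zero, sub_zero]
      positivity
    · have h1 : p₁.toReal ≤ p₀.toReal := ENNReal.toReal_mono h (le_of_lt hp)
      have := one_div_le_one_div_of_le hp1r0 h1
      linarith
  refine ⟨1/2, 1, by norm_num, by norm_num, ?_⟩
  intro m k n hk hkm hn2
  have hm : 0 < m := lt_of_lt_of_le hk hkm
  haveI : Nonempty (Fin m) := ⟨⟨0, hm⟩⟩
  have hm' : (0:ℝ) < m := by exact_mod_cast hm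
  have hk' : (1:ℝ) ≤ k := by exact_mod_cast hk
  have hkm' : (k:ℝ) ≤ m := by exact_mod_cast hkm
  set e₀ : ℝ := 1 / p₁.toReal - 1 / p₀.toReal with he₀def
  set ν : ℝ := (k : ℝ) ^ e₀ with hνdef
  have hν1 : 1 ≤ ν := Real.one_le_rpow hk' he₀
  have hν0 : 0 < ν := lt_of_lt_of_le one_pos hν1
  have hνm : ν ≤ (m : ℝ) ^ e₀ := Real.rpow_le_rpow (by positivity) hkm' he₀
  set M : Set (Fin m → ℝ) := pBall m p₀ ∩ ν • pBall m p₁ with hMdef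
  set B : ℝ := ν * (m : ℝ) ^ (1 / q.toReal - 1 / p₁.toReal) with hBdef
  -- 0 ∈ M
  have h0p : ∀ p : ℝ≥0∞, 1 ≤ p → (0 : Fin m → ℝ) ∈ pBall m p := by
    intro p hp1
    have : pNorm p (0 : Fin m → ℝ) = 0 := pNorm_zero hm p (fun h => by simp [h] at hp1)
    simp [pBall, this]
  have h0M : (0 : Fin m → ℝ) ∈ M := by
    constructor
    · exact h0p p₀ (le_trans hq (le_trans hqp₁ (le_of_lt hp)))
    · exact ⟨0, h0p p₁ (le_trans hq hqp₁), smul_zero ν⟩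
  haveI : Nonempty ↥M := ⟨⟨0, h0M⟩⟩
  -- q-norm bound on M
  have hMB : ∀ x ∈ M, pNorm q x ≤ B := by
    intro x hx
    obtain ⟨-, u, hu, rfl⟩ := hx
    have hcomp : pNorm q (ν • u) ≤
        (m : ℝ) ^ (1 / q.toReal - 1 / p₁.toReal) * pNorm p₁ (ν • u) := by
      have := pm_ineq hm (ν • u) hqr0 hqp1r
      simpa [pNorm, if_neg hqtop, if_neg hp₁top] using this
    have hp1n : pNorm p₁ (ν • u) = ν * pNorm p₁ u := pNorm_smul hp₁top hp1r0 ν (le_of_lt hν0) u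
    have : pNorm p₁ (ν • u) ≤ ν := by
      rw [hp1n]
      calc ν * pNorm p₁ u ≤ ν * 1 := mul_le_mul_of_nonneg_left hu (le_of_lt hν0)
        _ = ν := mul_one ν
    calc pNorm q (ν • u) ≤ (m : ℝ) ^ (1 / q.toReal - 1 / p₁.toReal) * pNorm p₁ (ν • u) := hcomp
      _ ≤ (m : ℝ) ^ (1 / q.toReal - 1 / p₁.toReal) * ν := by
          apply mul_le_mul_of_nonneg_left this (by positivity)
      _ = B := by rw [hBdef]; ring
  have hbot : Module.finrank ℝ (⊥ : Submodule ℝ (Fin m → ℝ)) ≤ n := by simp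
  haveI : Nonempty {L : Submodule ℝ (Fin m → ℝ) // Module.finrank ℝ L ≤ n} := ⟨⟨⊥, hbot⟩⟩
  constructor
  · -- lower bound
    simp only [kolWidth]
    apply le_ciInf
    rintro ⟨L, hL⟩
    haveI : Nonempty ↥L := ⟨0⟩
    obtain ⟨V, hVann, hVrank⟩ := ann_lemma L
    obtain ⟨z, hzV, hzb, hz1⟩ := cube_lemma V
    have hmn : m ≤ 2 * (m - Module.finrank ℝ L) := by omega
    have hhalf : (m : ℝ) / 2 ≤ ∑ i, |z i| := by
      have h1 : ((m - Module.finrank ℝ L : ℕ) : ℝ) ≤ (Module.finrank ℝ ↥V : ℝ) := by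
        exact_mod_cast hVrank
      have h2 : (m : ℝ) ≤ 2 * ((m - Module.finrank ℝ L : ℕ) : ℝ) := by exact_mod_cast hmn
      linarith
    set sg : Fin m → ℝ := fun i => if 0 ≤ z i then 1 else -1 with hsgdef
    have hsg1 : ∀ i, |sg i| ≤ 1 := by
      intro i
      by_cases h : 0 ≤ z i <;> simp [hsgdef, h]
    have hsgz : ∀ i, sg i * z i = |z i| := by
      intro i
      by_cases h : 0 ≤ z i
      · simp [hsgdef, h, abs_of_nonneg h]
      · simp only [hsgdef, if_neg h]
        rw [abs_of_neg (lt_of_not_ge h)]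
        ring
    set a : ℝ := ν * (m : ℝ) ^ (-(1/p₁.toReal)) with hadef
    have ha0 : 0 < a := by positivity
    set x : Fin m → ℝ := a • sg with hxdef
    have hmm : (m:ℝ) ^ (-(1/p₁.toReal)) * (m:ℝ) ^ ((1:ℝ)/p₁.toReal) = 1 := by
      rw [← Real.rpow_add hm']
      norm_num
    have hxM : x ∈ M := by
      constructor
      · -- in pBall p₀
        by_cases hp₀top : p₀ = ∞
        · have ha1 : a ≤ 1 := by
            have hν' : ν ≤ (m:ℝ) ^ ((1:ℝ)/p₁.toReal) := by
              rw [he₀def, hp₀top] at hνm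
              simpa using hνm
            calc a ≤ (m:ℝ) ^ ((1:ℝ)/p₁.toReal) * (m : ℝ) ^ (-(1/p₁.toReal)) := by
                  rw [hadef]
                  apply mul_le_mul_of_nonneg_right hν' (by positivity)
              _ = 1 := by rw [mul_comm]; exact hmm
          show pNorm p₀ x ≤ 1
          rw [pNorm, if_pos hp₀top]
          apply ciSup_le
          intro i
          calc |x i| = a * |sg i| := by
                rw [hxdef]
                simp only [Pi.smul_apply, smul_eq_mul, abs_mul, abs_of_pos ha0]
            _ ≤ a * 1 := mul_le_mul_of_nonneg_left (hsg1 i) (le_of_lt ha0)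
            _ ≤ 1 := by rw [mul_one]; exact ha1
        · have hp0r1 : 1 ≤ p₀.toReal := by
            have := ENNReal.toReal_mono hp₀top (le_trans hq (le_trans hqp₁ (le_of_lt hp)))
            simpa using this
          have hp0r0 : 0 < p₀.toReal := lt_of_lt_of_le one_pos hp0r1
          show pNorm p₀ x ≤ 1
          calc pNorm p₀ (a • sg) ≤ a * (m:ℝ) ^ (1/p₀.toReal) :=
                pNorm_bd hp₀top hp0r0 a (le_of_lt ha0) sg hsg1
            _ ≤ (m:ℝ)^e₀ * (m : ℝ) ^ (-(1/p₁.toReal)) * (m:ℝ) ^ (1/p₀.toReal) := by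
                rw [hadef]
                have : ν * (m : ℝ) ^ (-(1/p₁.toReal)) ≤ (m:ℝ)^e₀ * (m : ℝ) ^ (-(1/p₁.toReal)) :=
                  mul_le_mul_of_nonneg_right hνm (by positivity)
                apply mul_le_mul_of_nonneg_right this (by positivity)
            _ = (m:ℝ) ^ (e₀ + -(1/p₁.toReal) + 1/p₀.toReal) := by
                rw [Real.rpow_add hm', Real.rpow_add hm']
            _ = 1 := by
                have hexp : e₀ + -(1/p₁.toReal) + 1/p₀.toReal = 0 := by rw [he₀def]; ring
                rw [hexp, Real.rpow_zero]
      · -- in ν • pBall p₁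
        refine ⟨(m : ℝ) ^ (-(1/p₁.toReal)) • sg, ?_, ?_⟩
        · show pNorm p₁ _ ≤ 1
          calc pNorm p₁ ((m : ℝ) ^ (-(1/p₁.toReal)) • sg)
              ≤ (m : ℝ) ^ (-(1/p₁.toReal)) * (m:ℝ) ^ (1/p₁.toReal) :=
                pNorm_bd hp₁top hp1r0 _ (by positivity) sg hsg1
            _ = 1 := hmm
        · show ν • (((m : ℝ) ^ (-(1/p₁.toReal))) • sg) = x
          rw [smul_smul, hxdef, hadef]
    -- the key pointwise estimate
    have key : ∀ y : ↥L, 1/2 * (ν * (m:ℝ) ^ (1/q.toReal - 1/p₁.toReal)) ≤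
        pNorm q (x - (y : Fin m → ℝ)) := by
      intro y
      have hann : ∑ i, (y : Fin m → ℝ) i * z i = 0 := hVann z hzV y y.2
      set u : Fin m → ℝ := x - (y : Fin m → ℝ) with hudef
      have h1 : ∑ i, u i * z i ≤ ∑ i, |u i| := by
        apply Finset.sum_le_sum
        intro i _
        calc u i * z i ≤ |u i * z i| := le_abs_self _
          _ = |u i| * |z i| := abs_mul _ _
          _ ≤ |u i| * 1 := mul_le_mul_of_nonneg_left (hzb i) (abs_nonneg _)
          _ = |u i| := mul_one _
      have h2 : a * ∑ i, |z i| ≤ ∑ i, u i * z i := by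
        have : ∑ i, u i * z i = a * (∑ i, sg i * z i) - ∑ i, (y : Fin m → ℝ) i * z i := by
          rw [Finset.mul_sum, ← Finset.sum_sub_distrib]
          apply Finset.sum_congr rfl
          intro i _
          rw [hudef, hxdef]
          simp only [Pi.sub_apply, Pi.smul_apply, smul_eq_mul]
          ring
        rw [this, hann, sub_zero]
        have : ∑ i, sg i * z i = ∑ i, |z i| := Finset.sum_congr rfl (fun i _ => hsgz i)
        rw [this]
      have h3 : a * ((m:ℝ)/2) ≤ ∑ i, |u i| := by
        calc a * ((m:ℝ)/2) ≤ a * ∑ i, |z i| := mul_le_mul_of_nonneg_left hhalf (le_of_lt ha0)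
          _ ≤ ∑ i, u i * z i := h2
          _ ≤ ∑ i, |u i| := h1
      have h4 : ∑ i, |u i| ≤ (m:ℝ) ^ (1 - 1/q.toReal) * pNorm q u := by
        have := pm_ineq hm u one_pos hqr1
        simpa [pNorm, if_neg hqtop, Real.rpow_one] using this
      have hpos : (0:ℝ) < (m:ℝ) ^ (1 - 1/q.toReal) := by positivity
      rw [← mul_le_mul_iff_right₀ hpos]
      have e1 : (m:ℝ)^(1-1/q.toReal) * (m:ℝ)^(1/q.toReal-1/p₁.toReal) = (m:ℝ)^(1-1/p₁.toReal) := by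
        rw [← Real.rpow_add hm']
        ring_nf
      have e2 : (m:ℝ)^(-(1/p₁.toReal)) * (m:ℝ)^(1:ℝ) = (m:ℝ)^(1-1/p₁.toReal) := by
        rw [← Real.rpow_add hm']
        ring_nf
      have hid : (m:ℝ)^(1-1/q.toReal) * (1/2 * (ν * (m:ℝ)^(1/q.toReal-1/p₁.toReal)))
          = a * ((m:ℝ)/2) := by
        rw [hadef]
        rw [show (m:ℝ)/2 = (m:ℝ)^(1:ℝ)/2 by rw [Real.rpow_one]]
        linear_combination (ν/2) * e1 - (ν/2) * e2
      rw [hid]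
      exact le_trans h3 h4
    have hbA : BddAbove (Set.range fun x' : M =>
        ⨅ y : ↥L, pNorm q ((x' : Fin m → ℝ) - (y : Fin m → ℝ))) := by
      refine ⟨B, ?_⟩
      rintro r ⟨x', rfl⟩
      calc (⨅ y : ↥L, pNorm q ((x' : Fin m → ℝ) - (y : Fin m → ℝ)))
          ≤ pNorm q ((x' : Fin m → ℝ) - ((0 : ↥L) : Fin m → ℝ)) := by
            apply ciInf_le
            refine ⟨0, ?_⟩
            rintro r ⟨y, rfl⟩
            exact pNorm_nonneg _ _
        _ = pNorm q (x' : Fin m → ℝ) := by simp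
        _ ≤ B := hMB _ x'.2
    calc 1/2 * (ν * (m:ℝ) ^ (1/q.toReal - 1/p₁.toReal))
        ≤ ⨅ y : ↥L, pNorm q (x - (y : Fin m → ℝ)) := le_ciInf key
      _ ≤ ⨆ x' : M, ⨅ y : ↥L, pNorm q ((x' : Fin m → ℝ) - (y : Fin m → ℝ)) :=
          le_ciSup hbA ⟨x, hxM⟩
  · -- upper bound
    have hbddB : BddBelow (Set.range fun L : {L : Submodule ℝ (Fin m → ℝ) //
        Module.finrank ℝ L ≤ n} =>
        ⨆ x : M, ⨅ y : ↥(L : Submodule ℝ (Fin m → ℝ)),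
          pNorm q ((x : Fin m → ℝ) - (y : Fin m → ℝ))) := by
      refine ⟨0, ?_⟩
      rintro r ⟨L, rfl⟩
      apply Real.iSup_nonneg
      intro x
      haveI : Nonempty ↥(L : Submodule ℝ (Fin m → ℝ)) := ⟨0⟩
      exact le_ciInf (fun y => pNorm_nonneg _ _)
    have upper : kolWidth q n M ≤ B := by
      simp only [kolWidth]
      calc (⨅ L : {L : Submodule ℝ (Fin m → ℝ) // Module.finrank ℝ L ≤ n},
            ⨆ x : M, ⨅ y : ↥(L : Submodule ℝ (Fin m → ℝ)),
              pNorm q ((x : Fin m → ℝ) - (y : Fin m → ℝ)))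
          ≤ ⨆ x : M, ⨅ y : ↥((⊥ : Submodule ℝ (Fin m → ℝ))),
              pNorm q ((x : Fin m → ℝ) - (y : Fin m → ℝ)) := ciInf_le hbddB ⟨⊥, hbot⟩
        _ ≤ B := by
            apply ciSup_le
            intro x
            haveI : Nonempty ↥(⊥ : Submodule ℝ (Fin m → ℝ)) := ⟨0⟩
            calc (⨅ y : ↥(⊥ : Submodule ℝ (Fin m → ℝ)),
                  pNorm q ((x : Fin m → ℝ) - (y : Fin m → ℝ)))
                ≤ pNorm q ((x : Fin m → ℝ) - ((0 : ↥(⊥ : Submodule ℝ (Fin m → ℝ))) : Fin m → ℝ)) := by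
                  apply ciInf_le
                  refine ⟨0, ?_⟩
                  rintro r ⟨y, rfl⟩
                  exact pNorm_nonneg _ _
              _ = pNorm q (x : Fin m → ℝ) := by simp
              _ ≤ B := hMB _ x.2
    calc kolWidth q n M ≤ B := upper
      _ = 1 * (ν * (m:ℝ) ^ (1/q.toReal - 1/p₁.toReal)) := by rw [one_mul]
end
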